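/- Let H be a real symmetric invertible d×d matrix with exactly one negative eigenvalue, and let v be a unit vector with v·H⁻¹v = -1/μ for some μ > 0. Then H + μ v⊗v is symmetric positive semidefinite with det(H + μ v⊗v) = 0, and its kernel is the one-dimensional span of H⁻¹v. -/

import Mathlib

open Matrix

theorem stmt_12 (d : ℕ) (H : Matrix (Fin d) (Fin d) ℝ)
    (hH : H.IsHermitian) (hHinv : IsUnit H.det)
    (hHneg : (Finset.univ.filter (fun i => hH.eigenvalues i < 0)).card = 1)
    (μ : ℝ) (hμ : 0 < μ)
    (v : Fin d → ℝ) (hv : v ⬝ᵥ v = 1)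
    (hvH : v ⬝ᵥ H⁻¹.mulVec v = -1 / μ) :
    (H + μ • vecMulVec v v).PosSemidef ∧
    (H + μ • vecMulVec v v).det = 0 ∧
    LinearMap.ker (Matrix.toLin' (H + μ • vecMulVec v v)) =
      Submodule.span ℝ {H⁻¹.mulVec v} ∧
    Module.finrank ℝ (LinearMap.ker (Matrix.toLin' (H + μ • vecMulVec v v))) = 1 := by
  set M : Matrix (Fin d) (Fin d) ℝ := H + μ • vecMulVec v v with hM
  set w : Fin d → ℝ := H⁻¹ *ᵥ v with hw
  have hμ' : μ ≠ 0 := ne_of_gt hμ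
  have hHw : H *ᵥ w = v := by
    rw [hw, mulVec_mulVec, mul_nonsing_inv _ hHinv, one_mulVec]
  have hvw : v ⬝ᵥ w = -1 / μ := hvH
  have hvvx : ∀ x : Fin d → ℝ, (vecMulVec v v) *ᵥ x = (v ⬝ᵥ x) • v := by
    intro x
    ext i
    simp only [vecMulVec, mulVec, dotProduct, of_apply, Pi.smul_apply, smul_eq_mul,
      Finset.sum_mul]
    exact Finset.sum_congr rfl fun j _ => by ring
  have hMx : ∀ x : Fin d → ℝ, M *ᵥ x = H *ᵥ x + (μ * (v ⬝ᵥ x)) • v := by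
    intro x
    rw [hM, add_mulVec, smul_mulVec, hvvx, smul_smul]
  have hMw : M *ᵥ w = 0 := by
    rw [hMx, hHw, hvw]
    have : μ * (-1 / μ) = -1 := by field_simp
    rw [this]
    simp
  have hwne : w ≠ 0 := by
    intro h
    rw [h, dotProduct_zero] at hvw
    have : μ * 0 = μ * (-1/μ) := by rw [hvw]
    field_simp at this
    simp at this
  have hMH : M.IsHermitian := by
    have hvv : (vecMulVec v v)ᴴ = vecMulVec v v := by
      ext i j
      simp only [conjTranspose_apply, vecMulVec_apply, star_trivial]
      ring
    show Mᴴ = M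
    rw [hM, conjTranspose_add, hH.eq, conjTranspose_smul, hvv, star_trivial]
  have hMT : Mᵀ = M := by
    rw [← conjTranspose_eq_transpose_of_trivial]; exact hMH
  -- spectral expansion of quadratic form of H
  set g : (Fin d → ℝ) → (Fin d → ℝ) :=
    fun x => star (hH.eigenvectorUnitary : Matrix (Fin d) (Fin d) ℝ) *ᵥ x with hg
  have hquad : ∀ x : Fin d → ℝ, x ⬝ᵥ H *ᵥ x = ∑ i, hH.eigenvalues i * (g x i)^2 := by
    intro x
    conv_lhs => rw [hH.spectral_theorem, Unitary.conjStarAlgAut_apply]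
    rw [← mulVec_mulVec, ← mulVec_mulVec, dotProduct_mulVec]
    have h1 : x ᵥ* (hH.eigenvectorUnitary : Matrix (Fin d) (Fin d) ℝ)
        = star (hH.eigenvectorUnitary : Matrix (Fin d) (Fin d) ℝ) *ᵥ x := by
      rw [star_eq_conjTranspose, conjTranspose_eq_transpose_of_trivial, mulVec_transpose]
    rw [h1]
    simp only [hg, dotProduct, mulVec_diagonal, Function.comp_apply, RCLike.ofReal_real_eq_id,
      id_eq]
    exact Finset.sum_congr rfl fun i _ => by ring
  obtain ⟨i₀, hi₀⟩ := Finset.card_eq_one.mp hHneg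
  have hneg_iff : ∀ i, hH.eigenvalues i < 0 ↔ i = i₀ := by
    intro i
    constructor
    · intro h
      have : i ∈ Finset.univ.filter (fun i => hH.eigenvalues i < 0) := by simp [h]
      rw [hi₀] at this
      simpa using this
    · intro h
      have h2 : i₀ ∈ Finset.univ.filter (fun j => hH.eigenvalues j < 0) := by rw [hi₀]; simp
      rw [h]
      simpa using h2
  have hkey : ∀ z : Fin d → ℝ, g z i₀ = 0 → 0 ≤ z ⬝ᵥ H *ᵥ z := by
    intro z hz
    rw [hquad]
    apply Finset.sum_nonneg
    intro i _
    by_cases hii : i = i₀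
    · subst hii; rw [hz]; simp
    · have : ¬ hH.eigenvalues i < 0 := fun h => hii ((hneg_iff i).mp h)
      have h1 : 0 ≤ hH.eigenvalues i := not_lt.mp this
      positivity
  have hqH : ∀ y : Fin d → ℝ, y ⬝ᵥ M *ᵥ y = y ⬝ᵥ H *ᵥ y + μ * (v ⬝ᵥ y)^2 := by
    intro y
    rw [hMx, dotProduct_add, dotProduct_smul]
    have h2 : y ⬝ᵥ v = v ⬝ᵥ y := dotProduct_comm y v
    rw [smul_eq_mul, h2]
    ring
  have hPSD : M.PosSemidef := by
    refine PosSemidef.of_dotProduct_mulVec_nonneg hMH fun x => ?_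
    rw [star_trivial]
    by_contra hq
    push_neg at hq
    have hwMx : w ⬝ᵥ M *ᵥ x = 0 := by
      rw [dotProduct_mulVec, ← mulVec_transpose, hMT, hMw, zero_dotProduct]
    by_cases hb : g x i₀ = 0
    · have h1 := hkey x hb
      have h2 := hqH x
      nlinarith [sq_nonneg (v ⬝ᵥ x), mul_nonneg hμ.le (sq_nonneg (v ⬝ᵥ x))]
    · set a : ℝ := g w i₀ with ha
      set b : ℝ := -(g x i₀) with hbb
      set z : Fin d → ℝ := a • x + b • w with hz
      have hbne : b ≠ 0 := by simpa [hbb] using hb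
      have hgz : g z i₀ = 0 := by
        simp only [hz, hg, mulVec_add, mulVec_smul, Pi.add_apply, Pi.smul_apply, smul_eq_mul]
        simp only [← hg, ← ha, hbb]
        ring
      have hzH0 : 0 ≤ z ⬝ᵥ H *ᵥ z := hkey z hgz
      have hMz : M *ᵥ z = a • (M *ᵥ x) := by
        rw [hz, mulVec_add, mulVec_smul, mulVec_smul, hMw, smul_zero, add_zero]
      have hzM : z ⬝ᵥ M *ᵥ z = a^2 * (x ⬝ᵥ M *ᵥ x) := by
        rw [hMz, hz, add_dotProduct, smul_dotProduct, smul_dotProduct, dotProduct_smul,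
          dotProduct_smul, hwMx]
        simp only [smul_eq_mul, mul_zero, add_zero]
        ring
      have hvz : v ⬝ᵥ z = a * (v ⬝ᵥ x) + b * (-1/μ) := by
        rw [hz, dotProduct_add, dotProduct_smul, dotProduct_smul, hvw]
        simp [smul_eq_mul]
      have hzH : z ⬝ᵥ H *ᵥ z = a^2 * (x ⬝ᵥ M *ᵥ x) - μ * (v ⬝ᵥ z)^2 := by
        have := hqH z
        rw [hzM] at this
        linarith
      rcases eq_or_ne a 0 with ha0 | ha0
      · rw [hzH, hvz, ha0] at hzH0
        have hb2 : 0 < b^2 := by positivity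
        have : (0:ℝ) * (v ⬝ᵥ x) + b * (-1/μ) = -(b/μ) := by ring
        rw [this] at hzH0
        have : μ * (-(b/μ))^2 = b^2/μ := by field_simp
        nlinarith [div_pos hb2 hμ]
      · have ha2 : 0 < a^2 := by positivity
        rw [hzH] at hzH0
        nlinarith [mul_nonneg hμ.le (sq_nonneg (v ⬝ᵥ z))]
  have hdet : M.det = 0 := by
    rw [← Matrix.exists_mulVec_eq_zero_iff]
    exact ⟨w, hwne, hMw⟩
  have hker : LinearMap.ker (Matrix.toLin' M) = Submodule.span ℝ {w} := by
    ext x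
    rw [LinearMap.mem_ker, Matrix.toLin'_apply, Submodule.mem_span_singleton]
    constructor
    · intro hx
      refine ⟨-(μ * (v ⬝ᵥ x)), ?_⟩
      have h1 : H *ᵥ x = -((μ * (v ⬝ᵥ x)) • v) := by
        have := hMx x
        rw [hx] at this
        linear_combination (norm := module) -this
      have h2 : H⁻¹ *ᵥ (H *ᵥ x) = x := by
        rw [mulVec_mulVec, nonsing_inv_mul _ hHinv, one_mulVec]
      rw [h1, mulVec_neg, mulVec_smul, ← hw] at h2
      rw [neg_smul]
      exact h2
    · rintro ⟨c, rfl⟩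
      rw [mulVec_smul, hMw, smul_zero]
  refine ⟨hPSD, hdet, hker, ?_⟩
  rw [hker]
  exact finrank_span_singleton hwne
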